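/- Weighted Hölder interpolation bound (key inequality in the proof of Theorem 4.7): Let ς∈(0,1), p>1 and α = ς + 1/p with α∈(ς,1), let ρ>0 and κ>0 with ρ/p ≤ κ. There is a constant C, depending only on ς, p, ρ, κ, such that for every continuously differentiable B:ℝ→ℂ with finite ‖B‖_{W^{1,p}_ρ}, ‖B‖_{L^p_ρ} and ‖B‖_{C⁰_κ}, one has ‖B‖_{C^{0,ς}_κ} ≤ C( ‖B‖_{W^{1,p}_ρ}^{α} · ‖B‖_{L^p_ρ}^{1−α} + ‖B‖_{C⁰_κ} ). -/

import Mathlib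

open MeasureTheory Set

/-- The weight `w_ρ(x) = (1+x²)^{-ρ/2}`. -/
noncomputable def wgt (ρ x : ℝ) : ℝ := (1 + x ^ 2) ^ (-(ρ / 2))

/-- Weighted `L^p` norm of a complex-valued function. -/
noncomputable def LpWC (ρ p : ℝ) (u : ℝ → ℂ) : ℝ :=
  (∫ x : ℝ, wgt ρ x * ‖u x‖ ^ p) ^ (1 / p)

/-- Weighted `W^{1,p}` norm of a complex-valued function. -/
noncomputable def W1pWC (ρ p : ℝ) (u : ℝ → ℂ) : ℝ :=
  ((∫ x : ℝ, wgt ρ x * ‖u x‖ ^ p) + ∫ x : ℝ, wgt ρ x * ‖deriv u x‖ ^ p) ^ (1 / p)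

/-- `‖f‖_{C^{0,η}_κ} ≤ M`, spelled out pointwise: for every `L ≥ 1`, the sum of
`sup_{[-L,L]}|f|` and the Hölder(η) seminorm on `[-L,L]` is at most `M L^κ`. -/
def HolderNormLe (η κ M : ℝ) (f : ℝ → ℂ) : Prop :=
  ∀ L : ℝ, 1 ≤ L → ∀ x ∈ Icc (-L) L, ∀ z ∈ Icc (-L) L, ∀ y ∈ Icc (-L) L, z ≠ y →
    ‖f x‖ + ‖f z - f y‖ / |z - y| ^ η ≤ M * L ^ κ

lemma wgt_pos (ρ x : ℝ) : 0 < wgt ρ x :=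
  Real.rpow_pos_of_pos (by positivity) _

lemma one_le_c_mul_wgt {ρ R x : ℝ} (hρ : 0 ≤ ρ) (hx : x ^ 2 ≤ R ^ 2) :
    1 ≤ (1 + R ^ 2) ^ (ρ / 2) * wgt ρ x := by
  have hb : (0:ℝ) < 1 + x ^ 2 := by positivity
  have hb' : (0:ℝ) < 1 + R ^ 2 := by positivity
  have h1 : (1 + R ^ 2) ^ (-(ρ/2)) ≤ wgt ρ x :=
    Real.rpow_le_rpow_of_nonpos hb (by linarith) (by linarith)
  calc (1:ℝ) = (1 + R ^ 2) ^ (ρ/2) * (1 + R ^ 2) ^ (-(ρ/2)) := by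
        rw [← Real.rpow_add hb']; simp
    _ ≤ (1 + R ^ 2) ^ (ρ/2) * wgt ρ x :=
        mul_le_mul_of_nonneg_left h1 (Real.rpow_nonneg hb'.le _)

lemma holder_Ioc {p q : ℝ} (hpq : Real.HolderConjugate p q) {f : ℝ → ℝ} (hf : Continuous f)
    (hf0 : ∀ s, 0 ≤ f s) {a b : ℝ} (hab : a ≤ b) :
    ∫ s in Ioc a b, f s ≤ (∫ s in Ioc a b, f s ^ p) ^ (1/p) * (b - a) ^ (1/q) := by
  haveI : IsFiniteMeasure (volume.restrict (Ioc a b)) := by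
    constructor
    simp [Measure.restrict_apply_univ, Real.volume_Ioc]
  obtain ⟨Cf, hCf⟩ : ∃ C, ∀ s ∈ Icc a b, ‖f s‖ ≤ C :=
    (isCompact_Icc).exists_bound_of_continuousOn hf.continuousOn
  have hCb : ∀ᵐ s ∂(volume.restrict (Ioc a b)), ‖f s‖ ≤ Cf := by
    filter_upwards [ae_restrict_mem measurableSet_Ioc] with s hs
    exact hCf s (Ioc_subset_Icc_self hs)
  have hfm : MemLp f (ENNReal.ofReal p) (volume.restrict (Ioc a b)) :=
    MemLp.of_bound hf.aestronglyMeasurable Cf hCb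
  have hgm : MemLp (fun _ : ℝ => (1:ℝ)) (ENNReal.ofReal q) (volume.restrict (Ioc a b)) :=
    MemLp.of_bound aestronglyMeasurable_const 1 (ae_of_all _ (by simp))
  have := integral_mul_le_Lp_mul_Lq_of_nonneg hpq (ae_of_all _ hf0)
    (ae_of_all _ (by intro x; norm_num)) hfm hgm
  simpa [Real.volume_Ioc, ENNReal.toReal_ofReal (by linarith : (0:ℝ) ≤ b - a),
    Real.one_rpow, max_eq_left (sub_nonneg.mpr hab)] using this

lemma key_setint {ρ : ℝ} (hρ : 0 ≤ ρ) {F : ℝ → ℝ} (hF : Continuous F) (hF0 : ∀ s, 0 ≤ F s)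
    (hint : Integrable (fun x => wgt ρ x * F x)) {a b R : ℝ}
    (hsub : Ioc a b ⊆ Icc (-R) R) :
    ∫ s in Ioc a b, F s ≤ (1 + R ^ 2) ^ (ρ / 2) * ∫ x, wgt ρ x * F x := by
  set c := (1 + R ^ 2) ^ (ρ / 2) with hc
  have hc0 : 0 ≤ c := Real.rpow_nonneg (by positivity) _
  have step1 : ∫ s in Ioc a b, F s ≤ ∫ s in Ioc a b, c * (wgt ρ s * F s) := by
    apply setIntegral_mono_on (hF.integrableOn_Ioc)
      ((hint.const_mul c).integrableOn) measurableSet_Ioc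
    intro s hs
    have hx2 : s ^ 2 ≤ R ^ 2 := by
      have := hsub hs
      exact sq_le_sq' this.1 this.2
    calc F s = 1 * F s := (one_mul _).symm
      _ ≤ ((1 + R ^ 2) ^ (ρ/2) * wgt ρ s) * F s :=
          mul_le_mul_of_nonneg_right (one_le_c_mul_wgt hρ hx2) (hF0 s)
      _ = c * (wgt ρ s * F s) := by ring
  have step2 : ∫ s in Ioc a b, c * (wgt ρ s * F s) ≤ c * ∫ x, wgt ρ x * F x := by
    rw [integral_const_mul]
    apply mul_le_mul_of_nonneg_left _ hc0
    exact setIntegral_le_integral hint (ae_of_all _ fun x =>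
      mul_nonneg (wgt_pos ρ x).le (hF0 x))
  exact step1.trans step2

lemma norm_sub_le_setInt {B : ℝ → ℂ} (hB : ContDiff ℝ 1 B) {y z : ℝ} (h : y ≤ z) :
    ‖B z - B y‖ ≤ ∫ s in Ioc y z, ‖deriv B s‖ := by
  have hfd : ∀ s ∈ uIcc y z, DifferentiableAt ℝ B s := fun s _ =>
    (hB.differentiable (by norm_num)) s
  have hint : IntervalIntegrable (deriv B) volume y z :=
    (hB.continuous_deriv le_rfl).intervalIntegrable y z
  have heq := intervalIntegral.integral_deriv_eq_sub hfd hint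
  calc ‖B z - B y‖ = ‖∫ s in y..z, deriv B s‖ := by rw [heq]
    _ ≤ ∫ s in y..z, ‖deriv B s‖ := intervalIntegral.norm_integral_le_integral_norm h
    _ = ∫ s in Ioc y z, ‖deriv B s‖ := intervalIntegral.integral_of_le h

lemma incr_bound {p q ρ : ℝ} (hpq : Real.HolderConjugate p q) (hρ : 0 ≤ ρ) {B : ℝ → ℂ}
    (hB : ContDiff ℝ 1 B) (hI1 : Integrable fun x => wgt ρ x * ‖deriv B x‖ ^ p)
    {y z R : ℝ} (hyz : y ≤ z) (hsub : Ioc y z ⊆ Icc (-R) R) :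
    ‖B z - B y‖ ≤
      ((1 + R ^ 2) ^ (ρ / 2) * ∫ x, wgt ρ x * ‖deriv B x‖ ^ p) ^ (1/p) * (z - y) ^ (1/q) := by
  have contB' : Continuous (deriv B) := hB.continuous_deriv le_rfl
  have hFc : Continuous (fun s => ‖deriv B s‖ ^ p) :=
    (contB'.norm).rpow_const (fun x => Or.inr hpq.nonneg)
  have hF0 : ∀ s, (0:ℝ) ≤ ‖deriv B s‖ ^ p := fun s => Real.rpow_nonneg (norm_nonneg _) _
  have step1 := holder_Ioc hpq (contB'.norm) (fun s => norm_nonneg _) hyz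
  have step2 : ∫ s in Ioc y z, ‖deriv B s‖ ^ p ≤
      (1 + R ^ 2) ^ (ρ / 2) * ∫ x, wgt ρ x * ‖deriv B x‖ ^ p :=
    key_setint hρ hFc hF0 hI1 hsub
  calc ‖B z - B y‖ ≤ ∫ s in Ioc y z, ‖deriv B s‖ := norm_sub_le_setInt hB hyz
    _ ≤ (∫ s in Ioc y z, ‖deriv B s‖ ^ p) ^ (1/p) * (z - y) ^ (1/q) := step1
    _ ≤ ((1 + R ^ 2) ^ (ρ / 2) * ∫ x, wgt ρ x * ‖deriv B x‖ ^ p) ^ (1/p) * (z - y) ^ (1/q) := by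
        apply mul_le_mul_of_nonneg_right _ (Real.rpow_nonneg (by linarith) _)
        exact Real.rpow_le_rpow (setIntegral_nonneg measurableSet_Ioc fun s _ => hF0 s)
          step2 hpq.one_div_nonneg

lemma sup_bound {B : ℝ → ℂ} (hB : ContDiff ℝ 1 B) (x r : ℝ) (hr : 0 < r) :
    r * ‖B x‖ ≤ (∫ s in Ioc (x - r) x, ‖B s‖) +
      r * ∫ s in Ioc (x - r) x, ‖deriv B s‖ := by
  have contB : Continuous B := hB.continuous
  have contB' : Continuous (deriv B) := hB.continuous_deriv le_rfl
  set D := ∫ s in Ioc (x - r) x, ‖deriv B s‖ with hD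
  have hD0 : 0 ≤ D := setIntegral_nonneg measurableSet_Ioc fun s _ => norm_nonneg _
  have hpt : ∀ s ∈ Ioc (x - r) x, ‖B x‖ ≤ ‖B s‖ + D := by
    intro s hs
    have h1 : ‖B x - B s‖ ≤ ∫ u in Ioc s x, ‖deriv B u‖ := norm_sub_le_setInt hB hs.2
    have h2 : ∫ u in Ioc s x, ‖deriv B u‖ ≤ D := by
      apply setIntegral_mono_set ((contB'.norm).integrableOn_Ioc)
        (ae_of_all _ fun u => norm_nonneg _)
      exact HasSubset.Subset.eventuallyLE (Ioc_subset_Ioc_left hs.1.le)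
    calc ‖B x‖ = ‖B s + (B x - B s)‖ := by ring_nf
      _ ≤ ‖B s‖ + ‖B x - B s‖ := norm_add_le _ _
      _ ≤ ‖B s‖ + D := by linarith
  have hvol : (volume (Ioc (x - r) x)).toReal = r := by
    simp [Real.volume_Ioc]; linarith
  calc r * ‖B x‖ = ∫ _ in Ioc (x - r) x, ‖B x‖ := by
        rw [setIntegral_const, measureReal_def, hvol, smul_eq_mul]
    _ ≤ ∫ s in Ioc (x - r) x, (‖B s‖ + D) := by
        apply setIntegral_mono_on ((integrableOn_const_iff).mpr (Or.inr (by
          simp [Real.volume_Ioc])))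
          ((contB.norm.integrableOn_Ioc).add ((integrableOn_const_iff).mpr (Or.inr (by
          simp [Real.volume_Ioc])))) measurableSet_Ioc hpt
    _ = (∫ s in Ioc (x - r) x, ‖B s‖) + r * D := by
        rw [integral_add (contB.norm.integrableOn_Ioc) ((integrableOn_const_iff).mpr (Or.inr (by
          simp [Real.volume_Ioc])))]
        rw [setIntegral_const, measureReal_def, hvol, smul_eq_mul]



set_option maxHeartbeats 2000000 in
/-- Weighted Hölder interpolation bound (key inequality in the proof of
Theorem 4.7): for `ς∈(0,1)`, `p>1`, `α = ς + 1/p < 1`, `ρ>0`, `κ>0` with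
`ρ/p ≤ κ`, there is `C` such that for every `C¹` function `B` with finite norms
(`M₀` being a bound for `‖B‖_{C⁰_κ}`),
`‖B‖_{C^{0,ς}_κ} ≤ C (‖B‖_{W^{1,p}_ρ}^α ‖B‖_{L^p_ρ}^{1-α} + ‖B‖_{C⁰_κ})`. -/
theorem weighted_holder_interpolation
    (ς p ρ κ : ℝ) (hς : ς ∈ Ioo (0 : ℝ) 1) (hp : 1 < p)
    (hα : ς + 1 / p < 1) (hρ : 0 < ρ) (hκ : 0 < κ) (hκρ : ρ / p ≤ κ) :
    ∃ C > (0 : ℝ), ∀ B : ℝ → ℂ,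
      ContDiff ℝ 1 B →
      MeasureTheory.Integrable (fun x => wgt ρ x * ‖B x‖ ^ p) →
      MeasureTheory.Integrable (fun x => wgt ρ x * ‖deriv B x‖ ^ p) →
      ∀ M₀ : ℝ, (∀ x : ℝ, (1 + x ^ 2) ^ (-(κ / 2)) * ‖B x‖ ≤ M₀) →
        HolderNormLe ς κ
          (C * (W1pWC ρ p B ^ (ς + 1 / p) * LpWC ρ p B ^ (1 - (ς + 1 / p)) + M₀)) B := by
  obtain ⟨hς0, hς1⟩ := hς
  have hp0 : (0:ℝ) < p := by linarith
  have hppos : (0:ℝ) < 1/p := by positivity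
  set q := p / (p - 1) with hqdef
  have hpq : p.HolderConjugate q := by
    exact (Real.holderConjugate_iff_eq_conjExponent hp).mpr hqdef
  have hq : 1/q = 1 - 1/p := by
    have h := hpq.inv_add_inv_eq_one
    rw [inv_eq_one_div, inv_eq_one_div] at h
    linarith
  have hqnn : (0:ℝ) ≤ 1/q := by rw [hq]; rw [show (1:ℝ)/p = 1/p from rfl]; linarith
  set α := ς + 1/p with hαdef
  have h1α : (0:ℝ) < 1 - α := by linarith
  have hqς : 1/q - ς = 1 - α := by rw [hαdef, hq]; ring
  refine ⟨3 * (2:ℝ) ^ (κ/2) + 4 * (5:ℝ) ^ (ρ/(2*p)) + 1, by positivity, ?_⟩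
  intro B hB hi0 hi1 M₀ hM₀
  have contB : Continuous B := hB.continuous
  have contB' : Continuous (deriv B) := hB.continuous_deriv le_rfl
  set I0 := ∫ x : ℝ, wgt ρ x * ‖B x‖ ^ p with hI0def
  set I1 := ∫ x : ℝ, wgt ρ x * ‖deriv B x‖ ^ p with hI1def
  have hI0nn : 0 ≤ I0 := integral_nonneg fun u =>
    mul_nonneg (wgt_pos ρ u).le (Real.rpow_nonneg (norm_nonneg _) _)
  have hI1nn : 0 ≤ I1 := integral_nonneg fun u =>
    mul_nonneg (wgt_pos ρ u).le (Real.rpow_nonneg (norm_nonneg _) _)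
  have hM0nn : 0 ≤ M₀ :=
    le_trans (mul_nonneg (Real.rpow_nonneg (by norm_num) _) (norm_nonneg _)) (hM₀ 0)
  set N := LpWC ρ p B with hNdef
  set W := W1pWC ρ p B with hWdef
  have hNeq : N = I0 ^ (1/p) := rfl
  have hWeq : W = (I0 + I1) ^ (1/p) := rfl
  have hNnn : 0 ≤ N := Real.rpow_nonneg hI0nn _
  have hWnn : 0 ≤ W := Real.rpow_nonneg (by linarith) _
  have hNW : N ≤ W := Real.rpow_le_rpow hI0nn (by linarith) (by positivity)
  set G := W ^ α * N ^ (1 - α) with hGdef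
  have hGnn : 0 ≤ G := mul_nonneg (Real.rpow_nonneg hWnn _) (Real.rpow_nonneg hNnn _)
  intro L hL x hx z hz y hy hzy
  have hL0 : (0:ℝ) < L := by linarith
  have hLκ : (1:ℝ) ≤ L ^ κ := Real.one_le_rpow hL hκ.le
  have hLκ0 : (0:ℝ) < L ^ κ := lt_of_lt_of_le one_pos hLκ
  have h2κ : (0:ℝ) < (2:ℝ) ^ (κ/2) := Real.rpow_pos_of_pos (by norm_num) _
  have h5ρ : (0:ℝ) < (5:ℝ) ^ (ρ/(2*p)) := Real.rpow_pos_of_pos (by norm_num) _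
  -- sup bound via M₀
  have supB : ∀ u : ℝ, u ∈ Icc (-L) L → ‖B u‖ ≤ 2 ^ (κ/2) * L ^ κ * M₀ := by
    intro u hu
    have hu2 : u ^ 2 ≤ L ^ 2 := sq_le_sq' hu.1 hu.2
    have hb : (0:ℝ) < 1 + u ^ 2 := by positivity
    have h1 : ‖B u‖ = (1 + u ^ 2) ^ (κ/2) * ((1 + u ^ 2) ^ (-(κ/2)) * ‖B u‖) := by
      rw [← mul_assoc, ← Real.rpow_add hb]
      simp
    have h2 : (1 + u ^ 2) ^ (κ/2) ≤ 2 ^ (κ/2) * L ^ κ := by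
      have hle : (1:ℝ) + u ^ 2 ≤ 2 * L ^ 2 := by nlinarith
      calc (1 + u ^ 2) ^ (κ/2) ≤ (2 * L ^ 2) ^ (κ/2) :=
            Real.rpow_le_rpow hb.le hle (by positivity)
        _ = 2 ^ (κ/2) * (L ^ 2) ^ (κ/2) := Real.mul_rpow (by norm_num) (by positivity)
        _ = 2 ^ (κ/2) * L ^ κ := by
            rw [← Real.rpow_natCast L 2, ← Real.rpow_mul hL0.le]
            rw [show ((2:ℕ):ℝ) * (κ/2) = κ by push_cast; ring]
    calc ‖B u‖ = (1 + u ^ 2) ^ (κ/2) * ((1 + u ^ 2) ^ (-(κ/2)) * ‖B u‖) := h1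
      _ ≤ (1 + u ^ 2) ^ (κ/2) * M₀ :=
          mul_le_mul_of_nonneg_left (hM₀ u) (Real.rpow_nonneg hb.le _)
      _ ≤ 2 ^ (κ/2) * L ^ κ * M₀ := mul_le_mul_of_nonneg_right h2 hM0nn
  -- weight constant on [-(L+1), L+1]
  set c := (1 + (L+1) ^ 2) ^ (ρ/2) with hcdef
  set cp := (1 + (L+1) ^ 2) ^ (ρ/(2*p)) with hcpdef
  have hcb : (0:ℝ) < 1 + (L+1) ^ 2 := by positivity
  have hcnn : 0 ≤ c := Real.rpow_nonneg hcb.le _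
  have hcpnn : 0 ≤ cp := Real.rpow_nonneg hcb.le _
  have hcpow : c ^ (1/p) = cp := by
    rw [hcdef, hcpdef, ← Real.rpow_mul hcb.le]
    congr 1
    field_simp
  have hcpL : cp ≤ 5 ^ (ρ/(2*p)) * L ^ κ := by
    have hle : (1:ℝ) + (L+1) ^ 2 ≤ 5 * L ^ 2 := by nlinarith
    calc cp ≤ (5 * L ^ 2) ^ (ρ/(2*p)) :=
          Real.rpow_le_rpow hcb.le hle (by positivity)
      _ = 5 ^ (ρ/(2*p)) * (L ^ 2) ^ (ρ/(2*p)) := Real.mul_rpow (by norm_num) (by positivity)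
      _ = 5 ^ (ρ/(2*p)) * L ^ (ρ/p) := by
          rw [← Real.rpow_natCast L 2, ← Real.rpow_mul hL0.le]
          rw [show ((2:ℕ):ℝ) * (ρ/(2*p)) = ρ/p by
            have hne := hp0.ne'
            push_cast
            field_simp]
      _ ≤ 5 ^ (ρ/(2*p)) * L ^ κ :=
          mul_le_mul_of_nonneg_left (Real.rpow_le_rpow_of_exponent_le hL hκρ) h5ρ.le
  -- increment bound
  have hsubR : ∀ a b : ℝ, -(L+1) ≤ a → b ≤ L+1 → Ioc a b ⊆ Icc (-(L+1)) (L+1) := by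
    intro a b ha hb s hs
    exact ⟨by linarith [hs.1.le], by linarith [hs.2]⟩
  have hinc : ∀ a b : ℝ, a ∈ Icc (-L) L → b ∈ Icc (-L) L → a ≤ b →
      ‖B b - B a‖ ≤ cp * W * (b - a) ^ (1/q) := by
    intro a b ha hb hab
    have h1 := incr_bound hpq hρ.le hB hi1 hab (hsubR a b (by linarith [ha.1]) (by linarith [hb.2]))
    refine h1.trans ?_
    apply mul_le_mul_of_nonneg_right _ (Real.rpow_nonneg (by linarith) _)
    calc (c * I1) ^ (1/p) ≤ (c * (I0 + I1)) ^ (1/p) :=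
          Real.rpow_le_rpow (mul_nonneg hcnn hI1nn)
            (mul_le_mul_of_nonneg_left (by linarith) hcnn) (by positivity)
      _ = c ^ (1/p) * (I0 + I1) ^ (1/p) := Real.mul_rpow hcnn (by linarith)
      _ = cp * W := by rw [hcpow, hWeq]
  -- sup bound via L^p norms
  have hsup : ∀ u : ℝ, u ∈ Icc (-L) L → ∀ r : ℝ, 0 < r → r ≤ 1 →
      r * ‖B u‖ ≤ cp * N * r ^ (1/q) + r * (cp * W * r ^ (1/q)) := by
    intro u hu r hr hr1
    have h0 := sup_bound hB u r hr
    have hss : Ioc (u - r) u ⊆ Icc (-(L+1)) (L+1) := hsubR (u-r) u (by linarith [hu.1]) (by linarith [hu.2])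
    have hrr : u - (u - r) = r := by ring
    have hBint : ∫ s in Ioc (u - r) u, ‖B s‖ ≤ cp * N * r ^ (1/q) := by
      have hhol := holder_Ioc hpq (contB.norm) (fun s => norm_nonneg _)
        (by linarith : u - r ≤ u)
      rw [hrr] at hhol
      refine hhol.trans ?_
      apply mul_le_mul_of_nonneg_right _ (Real.rpow_nonneg hr.le _)
      have hkey : ∫ s in Ioc (u - r) u, ‖B s‖ ^ p ≤ c * I0 :=
        key_setint hρ.le ((contB.norm).rpow_const (fun s => Or.inr hp0.le))
          (fun s => Real.rpow_nonneg (norm_nonneg _) _) hi0 hss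
      calc (∫ s in Ioc (u - r) u, ‖B s‖ ^ p) ^ (1/p) ≤ (c * I0) ^ (1/p) :=
            Real.rpow_le_rpow (setIntegral_nonneg measurableSet_Ioc fun s _ =>
              Real.rpow_nonneg (norm_nonneg _) _) hkey (by positivity)
        _ = cp * N := by rw [Real.mul_rpow hcnn hI0nn, hcpow, hNeq]
    have hDint : ∫ s in Ioc (u - r) u, ‖deriv B s‖ ≤ cp * W * r ^ (1/q) := by
      have hhol := holder_Ioc hpq (contB'.norm) (fun s => norm_nonneg _)
        (by linarith : u - r ≤ u)
      rw [hrr] at hhol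
      refine hhol.trans ?_
      apply mul_le_mul_of_nonneg_right _ (Real.rpow_nonneg hr.le _)
      have hkey : ∫ s in Ioc (u - r) u, ‖deriv B s‖ ^ p ≤ c * I1 :=
        key_setint hρ.le ((contB'.norm).rpow_const (fun s => Or.inr hp0.le))
          (fun s => Real.rpow_nonneg (norm_nonneg _) _) hi1 hss
      calc (∫ s in Ioc (u - r) u, ‖deriv B s‖ ^ p) ^ (1/p) ≤ (c * I1) ^ (1/p) :=
            Real.rpow_le_rpow (setIntegral_nonneg measurableSet_Ioc fun s _ =>
              Real.rpow_nonneg (norm_nonneg _) _) hkey (by positivity)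
        _ ≤ (c * (I0 + I1)) ^ (1/p) := Real.rpow_le_rpow (mul_nonneg hcnn hI1nn)
            (mul_le_mul_of_nonneg_left (by linarith) hcnn) (by positivity)
        _ = cp * W := by rw [Real.mul_rpow hcnn (by linarith), hcpow, hWeq]
    calc r * ‖B u‖ ≤ (∫ s in Ioc (u - r) u, ‖B s‖) + r * ∫ s in Ioc (u - r) u, ‖deriv B s‖ := h0
      _ ≤ cp * N * r ^ (1/q) + r * (cp * W * r ^ (1/q)) := by
          have := mul_le_mul_of_nonneg_left hDint hr.le
          linarith
  -- case I0 = 0 : B ≡ 0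
  rcases eq_or_lt_of_le hI0nn with hI0z | hI0p
  · have hf : Continuous (fun u : ℝ => wgt ρ u * ‖B u‖ ^ p) := by
      apply Continuous.mul
      · exact (continuous_const.add (continuous_pow 2)).rpow_const
          (fun u => Or.inl (by positivity : (1:ℝ) + u ^ 2 ≠ 0))
      · exact (contB.norm).rpow_const (fun u => Or.inr hp0.le)
    have hf0 : ∀ u, 0 ≤ wgt ρ u * ‖B u‖ ^ p := fun u =>
      mul_nonneg (wgt_pos ρ u).le (Real.rpow_nonneg (norm_nonneg _) _)
    have hae := (integral_eq_zero_iff_of_nonneg hf0 hi0).mp hI0z.symm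
    have hfz : (fun u : ℝ => wgt ρ u * ‖B u‖ ^ p) = 0 :=
      (hf.ae_eq_iff_eq volume continuous_const).mp hae
    have hBz : ∀ u : ℝ, B u = 0 := by
      intro u
      have h1 := congrFun hfz u
      simp only [Pi.zero_apply] at h1
      have h2 : ‖B u‖ ^ p = 0 := by
        rcases mul_eq_zero.mp h1 with h | h
        · exact absurd h (wgt_pos ρ u).ne'
        · exact h
      have h3 : ‖B u‖ = 0 := (Real.rpow_eq_zero (norm_nonneg _) hp0.ne').mp h2
      exact norm_eq_zero.mp h3
    have h00 : ‖(0:ℂ)‖ + ‖(0:ℂ) - 0‖ / |z - y| ^ ς = 0 := by simp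
    rw [hBz x, hBz z, hBz y, h00]
    exact mul_nonneg (mul_nonneg (by positivity) (by linarith)) hLκ0.le
  -- main case : I0 > 0
  · have hNpos : 0 < N := Real.rpow_pos_of_pos hI0p _
    have hWpos : 0 < W := lt_of_lt_of_le hNpos hNW
    set t := N / W with htdef
    have ht0 : 0 < t := div_pos hNpos hWpos
    have ht1 : t ≤ 1 := (div_le_one hWpos).mpr hNW
    have hNtW : N = t * W := by rw [htdef, div_mul_cancel₀ _ hWpos.ne']
    -- algebra : W * t ^ (1 - α) = G
    have hWα : W ^ α = W / W ^ (1 - α) := by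
      rw [eq_div_iff (Real.rpow_pos_of_pos hWpos _).ne']
      rw [← Real.rpow_add hWpos, show α + (1 - α) = 1 by ring, Real.rpow_one]
    have halg : W * t ^ (1 - α) = G := by
      rw [htdef, Real.div_rpow hNnn hWnn, hGdef, hWα]
      have hW1α : W ^ (1 - α) ≠ 0 := (Real.rpow_pos_of_pos hWpos _).ne'
      field_simp
    -- pointwise sup with r = t
    have hsupt : ∀ u : ℝ, u ∈ Icc (-L) L → ‖B u‖ ≤ 2 * (cp * W * t ^ (1/q)) := by
      intro u hu
      have h := hsup u hu t ht0 ht1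
      rw [hNtW] at h
      have h2 : t * ‖B u‖ ≤ t * (2 * (cp * W * t ^ (1/q))) := by
        calc t * ‖B u‖ ≤ cp * (t * W) * t ^ (1/q) + t * (cp * W * t ^ (1/q)) := h
          _ = t * (2 * (cp * W * t ^ (1/q))) := by ring
      exact le_of_mul_le_mul_left h2 ht0
    set h := |z - y| with hhdef
    have hh0 : 0 < h := abs_pos.mpr (sub_ne_zero.mpr hzy)
    have hBzy : ‖B z - B y‖ ≤ cp * W * h ^ (1/q) := by
      rcases le_total y z with hyz | hyz
      · rw [hhdef, abs_of_nonneg (by linarith)]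
        exact hinc y z hy hz hyz
      · rw [hhdef, abs_of_nonpos (by linarith), norm_sub_rev]
        have := hinc z y hz hy hyz
        simpa using this
    have hA : 0 ≤ 2 ^ (κ/2) * L ^ κ * M₀ := mul_nonneg (mul_nonneg h2κ.le hLκ0.le) hM0nn
    have hP : 0 ≤ 5 ^ (ρ/(2*p)) * L ^ κ * G := mul_nonneg (mul_nonneg h5ρ.le hLκ0.le) hGnn
    have hGpart : cp * (W * t ^ (1 - α)) ≤ 5 ^ (ρ/(2*p)) * L ^ κ * G := by
      rw [halg]
      exact mul_le_mul_of_nonneg_right hcpL hGnn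
    -- the Hölder quotient bound
    have hquot : ‖B z - B y‖ / h ^ ς ≤
        2 * (2 ^ (κ/2) * L ^ κ * M₀) + 4 * (5 ^ (ρ/(2*p)) * L ^ κ * G) := by
      rcases le_total h t with hht | hht
      · -- h ≤ t
        have hb : ‖B z - B y‖ / h ^ ς ≤ (cp * W * h ^ (1/q)) / h ^ ς := by
          gcongr
        have he : (cp * W * h ^ (1/q)) / h ^ ς = cp * W * h ^ (1/q - ς) := by
          rw [mul_div_assoc, ← Real.rpow_sub hh0]
        have hmono : h ^ (1/q - ς) ≤ t ^ (1/q - ς) :=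
          Real.rpow_le_rpow hh0.le hht (by rw [hqς]; linarith)
        have hkey : ‖B z - B y‖ / h ^ ς ≤ cp * (W * t ^ (1 - α)) := by
          calc ‖B z - B y‖ / h ^ ς ≤ cp * W * h ^ (1/q - ς) := he ▸ hb
            _ ≤ cp * W * t ^ (1/q - ς) :=
                mul_le_mul_of_nonneg_left hmono (mul_nonneg hcpnn hWnn)
            _ = cp * (W * t ^ (1 - α)) := by rw [hqς]; ring
        linarith only [hkey.trans hGpart, hA, hP]
      · rcases le_total h 1 with hh1 | hh1
        · -- t ≤ h ≤ 1
          have hnum : ‖B z - B y‖ ≤ 4 * (cp * W * t ^ (1/q)) := by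
            have h1 := hsupt z hz
            have h2 := hsupt y hy
            calc ‖B z - B y‖ ≤ ‖B z‖ + ‖B y‖ := norm_sub_le _ _
              _ ≤ 4 * (cp * W * t ^ (1/q)) := by linarith
          have htς0 : 0 < t ^ ς := Real.rpow_pos_of_pos ht0 _
          have htς : t ^ ς ≤ h ^ ς := Real.rpow_le_rpow ht0.le hht hς0.le
          have h4nn : 0 ≤ 4 * (cp * W * t ^ (1/q)) :=
            mul_nonneg (by norm_num)
              (mul_nonneg (mul_nonneg hcpnn hWnn) (Real.rpow_nonneg ht0.le _))
          have hb : ‖B z - B y‖ / h ^ ς ≤ (4 * (cp * W * t ^ (1/q))) / t ^ ς :=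
            div_le_div₀ h4nn hnum htς0 htς
          have he : (4 * (cp * W * t ^ (1/q))) / t ^ ς = 4 * (cp * (W * t ^ (1 - α))) := by
            rw [mul_div_assoc, mul_div_assoc, ← Real.rpow_sub ht0, hqς]
            ring
          have hkey : ‖B z - B y‖ / h ^ ς ≤ 4 * (cp * (W * t ^ (1 - α))) := he ▸ hb
          linarith only [hkey, hGpart, hA]
        · -- 1 ≤ h
          have hb : ‖B z - B y‖ / h ^ ς ≤ ‖B z - B y‖ := by
            apply div_le_self (norm_nonneg _)
            exact Real.one_le_rpow hh1 hς0.le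
          have hnum : ‖B z - B y‖ ≤ 2 * (2 ^ (κ/2) * L ^ κ * M₀) := by
            have h1 := supB z hz
            have h2 := supB y hy
            calc ‖B z - B y‖ ≤ ‖B z‖ + ‖B y‖ := norm_sub_le _ _
              _ ≤ 2 * (2 ^ (κ/2) * L ^ κ * M₀) := by linarith
          linarith only [hb.trans hnum, hP]
    -- conclude
    have hsupx := supB x hx
    have f1 : 0 ≤ 2 ^ (κ/2) * G * L ^ κ :=
      mul_nonneg (mul_nonneg h2κ.le hGnn) hLκ0.le
    have f2 : 0 ≤ 5 ^ (ρ/(2*p)) * M₀ * L ^ κ :=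
      mul_nonneg (mul_nonneg h5ρ.le hM0nn) hLκ0.le
    have f3 : 0 ≤ G * L ^ κ := mul_nonneg hGnn hLκ0.le
    have f4 : 0 ≤ M₀ * L ^ κ := mul_nonneg hM0nn hLκ0.le
    calc ‖B x‖ + ‖B z - B y‖ / h ^ ς ≤
        2 ^ (κ/2) * L ^ κ * M₀ +
          (2 * (2 ^ (κ/2) * L ^ κ * M₀) + 4 * (5 ^ (ρ/(2*p)) * L ^ κ * G)) := by
          linarith only [hsupx, hquot]
      _ ≤ (3 * (2:ℝ) ^ (κ/2) + 4 * (5:ℝ) ^ (ρ/(2*p)) + 1) * (G + M₀) * L ^ κ := by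
          linarith only [f1, f2, f3, f4]
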